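/- For a nonzero real number a, define operators on Schwartz functions φ : ℝ → ℂ by (N(t)φ)(x) = exp(iπ·t·x²)·φ(x) for t ∈ ℝ, (Fφ)(y) = ∫_ℝ φ(x)·exp(2πi·x·y) dx, and F^{−1} its inverse. Then for every Schwartz function φ and every x ∈ ℝ: (N(a) ∘ F ∘ N(a^{−1}) ∘ F^{−1} ∘ N(a) ∘ F^{−1}) φ (x) = exp(iπ·sgn(a)/4) · |a|^{1/2} · φ(a·x), where sgn(a) = 1 if a > 0 and −1 if a < 0. -/

import Mathlib

open MeasureTheory

/-- The quadratic phase operator `N(t)φ(x) = e^{iπtx²}·φ(x)`. -/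
noncomputable def Nop (t : ℝ) (φ : ℝ → ℂ) : ℝ → ℂ :=
  fun x => Complex.exp (Real.pi * Complex.I * t * x ^ 2) * φ x

/-- The Fourier transform `Fφ(y) = ∫ φ(x)·e^{2πixy} dx`. -/
noncomputable def Fop (φ : ℝ → ℂ) : ℝ → ℂ :=
  fun y => ∫ x : ℝ, φ x * Complex.exp (2 * Real.pi * Complex.I * x * y)

/-- The inverse Fourier transform `F⁻¹φ(y) = ∫ φ(x)·e^{−2πixy} dx`. -/
noncomputable def Finv (φ : ℝ → ℂ) : ℝ → ℂ :=
  fun y => ∫ x : ℝ, φ x * Complex.exp (-(2 * Real.pi * Complex.I * x * y))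

open Complex Real Filter
open scoped FourierTransform Topology

section aux

lemma poly_bound (p : Polynomial ℂ) : ∃ C k, ∀ x : ℝ, ‖p.eval (x:ℂ)‖ ≤ C * (1+‖x‖)^k := by
  induction p using Polynomial.induction_on' with
  | monomial n c =>
    refine ⟨‖c‖, n, fun x => ?_⟩
    rw [Polynomial.eval_monomial, norm_mul, norm_pow]
    have h1 : ‖(x:ℂ)‖ ≤ 1 + ‖x‖ := by rw [Complex.norm_real]; linarith [norm_nonneg x]
    exact mul_le_mul_of_nonneg_left (pow_le_pow_left₀ (norm_nonneg _) h1 n) (norm_nonneg c)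
  | add p q hp hq =>
    obtain ⟨C1, k1, h1⟩ := hp
    obtain ⟨C2, k2, h2⟩ := hq
    refine ⟨|C1| + |C2|, max k1 k2, fun x => ?_⟩
    have hb : (1:ℝ) ≤ 1 + ‖x‖ := by linarith [norm_nonneg x]
    have e1 : C1 * (1+‖x‖)^k1 ≤ |C1| * (1+‖x‖)^(max k1 k2) := by
      calc C1 * (1+‖x‖)^k1 ≤ |C1| * (1+‖x‖)^k1 := by
            apply mul_le_mul_of_nonneg_right (le_abs_self _) (by positivity)
        _ ≤ |C1| * (1+‖x‖)^(max k1 k2) := by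
            apply mul_le_mul_of_nonneg_left (pow_le_pow_right₀ hb (le_max_left _ _)) (abs_nonneg _)
    have e2 : C2 * (1+‖x‖)^k2 ≤ |C2| * (1+‖x‖)^(max k1 k2) := by
      calc C2 * (1+‖x‖)^k2 ≤ |C2| * (1+‖x‖)^k2 := by
            apply mul_le_mul_of_nonneg_right (le_abs_self _) (by positivity)
        _ ≤ |C2| * (1+‖x‖)^(max k1 k2) := by
            apply mul_le_mul_of_nonneg_left (pow_le_pow_right₀ hb (le_max_right _ _)) (abs_nonneg _)
    calc ‖(p+q).eval (x:ℂ)‖ ≤ ‖p.eval (x:ℂ)‖ + ‖q.eval (x:ℂ)‖ := by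
          rw [Polynomial.eval_add]; exact norm_add_le _ _
    _ ≤ C1 * (1+‖x‖)^k1 + C2 * (1+‖x‖)^k2 := add_le_add (h1 x) (h2 x)
    _ ≤ |C1| * (1+‖x‖)^(max k1 k2) + |C2| * (1+‖x‖)^(max k1 k2) := add_le_add e1 e2
    _ = (|C1| + |C2|) * (1+‖x‖)^(max k1 k2) := by ring
lemma chirp_hasDerivAt (c : ℂ) (x : ℝ) :
    HasDerivAt (fun y : ℝ => cexp (c * (y:ℂ)^2)) (2*c*x * cexp (c*(x:ℂ)^2)) x := by
  have h := (((hasDerivAt_pow 2 (x:ℂ)).const_mul c).cexp).comp_ofReal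
  convert h using 1
  push_cast
  ring

lemma chirp_contDiff (c : ℂ) : ContDiff ℝ ((⊤:ℕ∞)) (fun y : ℝ => cexp (c * (y:ℂ)^2)) := by
  apply ContDiff.cexp
  apply ContDiff.mul contDiff_const
  exact (Complex.ofRealCLM.contDiff).pow 2

lemma chirp_rep (c : ℂ) (n : ℕ) : ∃ p : Polynomial ℂ, ∀ x : ℝ,
    iteratedDeriv n (fun y : ℝ => cexp (c * (y:ℂ)^2)) x = p.eval (x:ℂ) * cexp (c*(x:ℂ)^2) := by
  induction n with
  | zero => exact ⟨1, fun x => by simp⟩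
  | succ n ih =>
    obtain ⟨p, hp⟩ := ih
    refine ⟨p.derivative + Polynomial.C (2*c) * Polynomial.X * p, fun x => ?_⟩
    rw [iteratedDeriv_succ]
    have hrw : iteratedDeriv n (fun y : ℝ => cexp (c * (y:ℂ)^2))
        = fun y : ℝ => p.eval (y:ℂ) * cexp (c*(y:ℂ)^2) := funext hp
    rw [hrw]
    have h1 : HasDerivAt (fun y : ℝ => p.eval (y:ℂ)) (p.derivative.eval (x:ℂ)) x :=
      (p.hasDerivAt (x:ℂ)).comp_ofReal
    have h := h1.mul (chirp_hasDerivAt c x)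
    rw [(show HasDerivAt (fun y : ℝ => p.eval (y:ℂ) * cexp (c*(y:ℂ)^2)) _ x from h).deriv]
    simp only [Polynomial.eval_add, Polynomial.eval_mul, Polynomial.eval_C, Polynomial.eval_X]
    ring

lemma chirp_temperate {c : ℂ} (hc : c.re = 0) :
    Function.HasTemperateGrowth (fun y : ℝ => cexp (c * (y:ℂ)^2)) := by
  refine ⟨chirp_contDiff c, fun n => ?_⟩
  obtain ⟨p, hp⟩ := chirp_rep c n
  obtain ⟨C, k, hC⟩ := poly_bound p
  refine ⟨k, C, fun x => ?_⟩
  rw [norm_iteratedFDeriv_eq_norm_iteratedDeriv, hp x, norm_mul]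
  have h1 : ‖cexp (c*(x:ℂ)^2)‖ = 1 := by
    rw [Complex.norm_exp]
    have h2 : (c * (x:ℂ)^2).re = 0 := by
      simp [Complex.mul_re, hc, ← Complex.ofReal_pow]
    rw [h2, Real.exp_zero]
  rw [h1, mul_one]
  exact hC x


lemma Finv_eq (f : ℝ → ℂ) : Finv f = 𝓕 f := by
  funext y
  rw [Real.fourier_real_eq_integral_exp_smul]
  refine integral_congr_ae (Eventually.of_forall fun x => ?_)
  simp only [smul_eq_mul]
  rw [mul_comm]
  congr 1
  push_cast
  ring

lemma Fop_eq (f : ℝ → ℂ) : Fop f = 𝓕⁻ f := by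
  funext y
  rw [Real.fourierInv_eq']
  refine integral_congr_ae (Eventually.of_forall fun x => ?_)
  simp only [smul_eq_mul, RCLike.inner_apply, starRingEnd_apply, star_trivial]
  rw [mul_comm]
  congr 1
  push_cast
  ring

lemma sqrt_Ia (a : ℝ) (ha : a ≠ 0) :
    (Complex.I * a) ^ (1/2 : ℂ)
      = Complex.exp (Complex.I * Real.pi * (if 0 < a then (1:ℂ) else -1) / 4)
        * (Real.sqrt |a| : ℂ) := by
  have hIa : Complex.I * (a:ℂ) ≠ 0 := by
    simp [Complex.I_ne_zero, Complex.ofReal_eq_zero, ha]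
  rw [Complex.cpow_def_of_ne_zero hIa]
  have habs : ‖Complex.I * (a:ℂ)‖ = |a| := by
    simp
  have hsqrt : Real.sqrt |a| = Real.exp (Real.log |a| / 2) := by
    have h0 : 0 < |a| := abs_pos.2 ha
    rw [← Real.exp_log (Real.sqrt_pos.2 h0), Real.log_sqrt h0.le]
  rcases lt_or_gt_of_ne ha with hneg | hpos
  · have harg : Complex.arg (Complex.I * (a:ℂ)) = -(π/2) := by
      have : Complex.I * (a:ℂ) = ((-a : ℝ) : ℂ) * (-Complex.I) := by push_cast; ring
      rw [this, Complex.arg_real_mul _ (by linarith), Complex.arg_neg_I]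
    rw [show Complex.log (Complex.I * (a:ℂ)) = (Real.log ‖Complex.I*(a:ℂ)‖ : ℂ) + Complex.arg (Complex.I*(a:ℂ)) * Complex.I from rfl, habs, harg, if_neg (not_lt.2 hneg.le)]
    rw [show (Real.log |a| : ℂ) + (-(π/2) : ℝ) * Complex.I
        = ((Real.log |a| / 2 : ℝ) : ℂ) * 2 + ((- (π/2) : ℝ) * Complex.I) by push_cast; ring]
    rw [show (((Real.log |a| / 2 : ℝ) : ℂ) * 2 + ((-(π/2) : ℝ) * Complex.I)) * (1/2 : ℂ)
        = ((Real.log |a| / 2 : ℝ) : ℂ) + Complex.I * (π : ℝ) * (-1) / 4 by push_cast; ring]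
    rw [Complex.exp_add, hsqrt]
    push_cast
    ring
  · have harg : Complex.arg (Complex.I * (a:ℂ)) = π/2 := by
      have : Complex.I * (a:ℂ) = ((a : ℝ) : ℂ) * Complex.I := by push_cast; ring
      rw [this, Complex.arg_real_mul _ hpos, Complex.arg_I]
    rw [show Complex.log (Complex.I * (a:ℂ)) = (Real.log ‖Complex.I*(a:ℂ)‖ : ℂ) + Complex.arg (Complex.I*(a:ℂ)) * Complex.I from rfl, habs, harg, if_pos hpos]
    rw [show (Real.log |a| : ℂ) + ((π/2 : ℝ) : ℂ) * Complex.I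
        = ((Real.log |a| / 2 : ℝ) : ℂ) * 2 + (((π/2) : ℝ) * Complex.I) by push_cast; ring]
    rw [show (((Real.log |a| / 2 : ℝ) : ℂ) * 2 + (((π/2) : ℝ) * Complex.I)) * (1/2 : ℂ)
        = ((Real.log |a| / 2 : ℝ) : ℂ) + Complex.I * (π : ℝ) * 1 / 4 by push_cast; ring]
    rw [Complex.exp_add, hsqrt]
    push_cast
    ring


/-- multiplication by the chirp as a map on Schwartz space -/
noncomputable def chirpS (t : ℝ) : SchwartzMap ℝ ℂ →L[ℝ] SchwartzMap ℝ ℂ :=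
  SchwartzMap.bilinLeftCLM (ContinuousLinearMap.mul ℝ ℂ)
    (chirp_temperate (c := (Real.pi : ℂ) * Complex.I * (t : ℂ)) (by simp))

lemma chirpS_apply (t : ℝ) (f : SchwartzMap ℝ ℂ) (x : ℝ) :
    chirpS t f x = f x * cexp ((Real.pi : ℂ) * Complex.I * (t:ℂ) * (x:ℂ)^2) := rfl

lemma Nop_eq (t : ℝ) (f : SchwartzMap ℝ ℂ) : Nop t ⇑f = ⇑(chirpS t f) := by
  funext x
  rw [Nop, chirpS_apply, mul_comm]

end aux

/-- The real Bruhat-word identity: for `a ≠ 0` and Schwartz `φ`,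
`(N(a) ∘ F ∘ N(a⁻¹) ∘ F⁻¹ ∘ N(a) ∘ F⁻¹)φ(x) = e^{iπ·sgn(a)/4}·|a|^{1/2}·φ(ax)`. -/
theorem real_bruhat_word (a : ℝ) (ha : a ≠ 0) (φ : SchwartzMap ℝ ℂ) (x : ℝ) :
    Nop a (Fop (Nop a⁻¹ (Finv (Nop a (Finv φ))))) x
      = Complex.exp (Complex.I * Real.pi * (if 0 < a then (1 : ℂ) else -1) / 4)
        * (Real.sqrt |a| : ℂ) * φ (a * x) := by
  classical
  set u₁ : SchwartzMap ℝ ℂ := SchwartzMap.fourierTransformCLM ℂ φ with hu₁def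
  have hu₁ : Finv ⇑φ = ⇑u₁ := by rw [Finv_eq]; rfl
  set u₂ : SchwartzMap ℝ ℂ := chirpS a u₁ with hu₂def
  have hu₂ : Nop a (Finv ⇑φ) = ⇑u₂ := by rw [hu₁, Nop_eq]
  set u₃ : SchwartzMap ℝ ℂ := SchwartzMap.fourierTransformCLM ℂ u₂ with hu₃def
  have hu₃ : Finv (Nop a (Finv ⇑φ)) = ⇑u₃ := by rw [hu₂, Finv_eq]; rfl
  set u₄ : SchwartzMap ℝ ℂ := chirpS a⁻¹ u₃ with hu₄def
  have hu₄ : Nop a⁻¹ (Finv (Nop a (Finv ⇑φ))) = ⇑u₄ := by rw [hu₃, Nop_eq]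
  rw [hu₄]
  -- the regularized family
  set β : ℝ → ℂ := fun ε => (ε : ℂ) - Complex.I / (a : ℂ) with hβdef
  have hβim : ∀ ε : ℝ, (β ε).im = -a⁻¹ := by
    intro ε; simp [hβdef, Complex.div_im, Complex.normSq_ofReal]
  have hβne : ∀ ε : ℝ, β ε ≠ 0 := by
    intro ε h
    have := hβim ε
    rw [h] at this
    simp only [Complex.zero_im] at this
    exact ha (inv_eq_zero.1 (neg_eq_zero.1 this.symm))
  set F : ℝ → ℂ := fun ε =>
    ∫ y : ℝ, cexp ((-(Real.pi:ℂ) * β ε) * (y:ℂ)^2 + (2*(Real.pi:ℂ)*Complex.I*(x:ℂ)) * (y:ℂ)) * u₃ y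
    with hFdef
  -- Claim A
  have hre : ∀ (ε y : ℝ), ((-(Real.pi:ℂ) * β ε) * (y:ℂ)^2
      + (2*(Real.pi:ℂ)*Complex.I*(x:ℂ)) * (y:ℂ)).re = -(Real.pi * ε * y^2) := by
    intro ε y
    rw [hβdef]
    simp [Complex.add_re, Complex.mul_re, Complex.mul_im, Complex.div_re, Complex.div_im,
      Complex.normSq_ofReal, ← Complex.ofReal_pow]
  have hconty : ∀ ε : ℝ, Continuous fun y : ℝ =>
      cexp ((-(Real.pi:ℂ) * β ε) * (y:ℂ)^2 + (2*(Real.pi:ℂ)*Complex.I*(x:ℂ)) * (y:ℂ)) * u₃ y := by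
    intro ε
    apply Continuous.mul ?_ u₃.continuous
    exact Complex.continuous_exp.comp
      ((continuous_const.mul (Complex.continuous_ofReal.pow 2)).add
        (continuous_const.mul Complex.continuous_ofReal))
  have claimA : Tendsto F (𝓝[>] (0:ℝ)) (𝓝 (Fop ⇑u₄ x)) := by
    have hgoal : Fop ⇑u₄ x = ∫ y : ℝ,
        cexp ((-(Real.pi:ℂ) * β 0) * (y:ℂ)^2 + (2*(Real.pi:ℂ)*Complex.I*(x:ℂ)) * (y:ℂ)) * u₃ y := by
      rw [Fop]
      refine integral_congr_ae (Eventually.of_forall fun y => ?_)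
      rw [hu₄def]
      simp only [chirpS_apply]
      rw [show (u₃ y * cexp ((Real.pi:ℂ)*Complex.I*((a⁻¹:ℝ):ℂ)*(y:ℂ)^2)) * cexp (2*(Real.pi:ℂ)*Complex.I*(y:ℂ)*(x:ℂ))
          = cexp ((Real.pi:ℂ)*Complex.I*((a⁻¹:ℝ):ℂ)*(y:ℂ)^2 + 2*(Real.pi:ℂ)*Complex.I*(y:ℂ)*(x:ℂ)) * u₃ y by
        rw [Complex.exp_add]; ring]
      congr 1
      rw [hβdef]
      have : ((a:ℂ)) ≠ 0 := Complex.ofReal_ne_zero.2 ha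
      push_cast
      field_simp
      ring
    rw [hgoal]
    apply tendsto_integral_filter_of_dominated_convergence (fun y => ‖u₃ y‖)
    · filter_upwards with ε
      exact (hconty ε).aestronglyMeasurable
    · filter_upwards [self_mem_nhdsWithin] with ε (hε : 0 < ε)
      filter_upwards with y
      rw [norm_mul, Complex.norm_exp, hre ε y]
      have h1 : Real.exp (-(Real.pi * ε * y^2)) ≤ 1 := by
        rw [Real.exp_le_one_iff]
        have : (0:ℝ) ≤ Real.pi * ε * y^2 := by positivity
        linarith
      calc Real.exp (-(Real.pi * ε * y^2)) * ‖u₃ y‖ ≤ 1 * ‖u₃ y‖ :=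
            mul_le_mul_of_nonneg_right h1 (norm_nonneg _)
        _ = ‖u₃ y‖ := one_mul _
    · exact u₃.integrable.norm
    · filter_upwards with y
      apply Tendsto.mono_left ?_ nhdsWithin_le_nhds
      apply Tendsto.mul ?_ tendsto_const_nhds
      apply (Complex.continuous_exp.tendsto _).comp
      have hc : Continuous fun ε : ℝ =>
          ((-(Real.pi:ℂ) * β ε) * (y:ℂ)^2 + (2*(Real.pi:ℂ)*Complex.I*(x:ℂ)) * (y:ℂ)) := by
        rw [hβdef]
        exact ((continuous_const.mul
          (Complex.continuous_ofReal.sub continuous_const)).mul continuous_const).add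
          continuous_const
      exact hc.tendsto 0
  -- Claim B
  set G : ℝ → ℂ := fun ε =>
    (1 / β ε) ^ (1/2 : ℂ) * ∫ ξ : ℝ, u₂ ξ * cexp (-(Real.pi:ℂ) * ((x:ℂ)-(ξ:ℂ))^2 / β ε)
    with hGdef
  have hπC : ((Real.pi : ℝ):ℂ) ≠ 0 := Complex.ofReal_ne_zero.2 Real.pi_ne_zero
  have hFinv2 : Finv ⇑u₂ = ⇑u₃ := by rw [Finv_eq]; rfl
  have claimB : ∀ ε : ℝ, 0 < ε → F ε = G ε := by
    intro ε hε
    have hbre0 : (-(Real.pi:ℂ) * β ε).re = -(Real.pi * ε) := by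
      rw [hβdef]
      simp [Complex.mul_re, Complex.div_im, Complex.div_re, Complex.normSq_ofReal]
    have hbre : (-(Real.pi:ℂ) * β ε).re < 0 := by
      rw [hbre0, neg_lt, neg_zero]
      positivity
    -- the inner function
    have hinner : ∀ y : ℝ, u₃ y = ∫ ξ : ℝ, u₂ ξ * cexp (-(2*(Real.pi:ℂ)*Complex.I*(ξ:ℂ)*(y:ℂ))) := by
      intro y
      rw [← hFinv2]
      rfl
    have step1 : F ε = ∫ y : ℝ, ∫ ξ : ℝ,
        cexp ((-(Real.pi:ℂ) * β ε) * (y:ℂ)^2 + (2*(Real.pi:ℂ)*Complex.I*(x:ℂ)) * (y:ℂ))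
          * (u₂ ξ * cexp (-(2*(Real.pi:ℂ)*Complex.I*(ξ:ℂ)*(y:ℂ)))) := by
      rw [hFdef]
      refine integral_congr_ae (Eventually.of_forall fun y => ?_)
      show cexp ((-(Real.pi:ℂ) * β ε) * (y:ℂ)^2 + (2*(Real.pi:ℂ)*Complex.I*(x:ℂ)) * (y:ℂ)) * u₃ y
        = ∫ ξ : ℝ, cexp ((-(Real.pi:ℂ) * β ε) * (y:ℂ)^2 + (2*(Real.pi:ℂ)*Complex.I*(x:ℂ)) * (y:ℂ))
            * (u₂ ξ * cexp (-(2*(Real.pi:ℂ)*Complex.I*(ξ:ℂ)*(y:ℂ))))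
      rw [hinner y, ← integral_const_mul]
    -- integrability on the product space
    have hprodcont : Continuous (Function.uncurry fun (y ξ : ℝ) =>
        cexp ((-(Real.pi:ℂ) * β ε) * (y:ℂ)^2 + (2*(Real.pi:ℂ)*Complex.I*(x:ℂ)) * (y:ℂ))
          * (u₂ ξ * cexp (-(2*(Real.pi:ℂ)*Complex.I*(ξ:ℂ)*(y:ℂ))))) := by
      have c1 : Continuous fun p : ℝ × ℝ =>
          cexp ((-(Real.pi:ℂ) * β ε) * (p.1:ℂ)^2 + (2*(Real.pi:ℂ)*Complex.I*(x:ℂ)) * (p.1:ℂ)) :=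
        Complex.continuous_exp.comp
          (((continuous_const.mul ((Complex.continuous_ofReal.comp continuous_fst).pow 2))).add
            (continuous_const.mul (Complex.continuous_ofReal.comp continuous_fst)))
      have c2 : Continuous fun p : ℝ × ℝ => u₂ p.2 := u₂.continuous.comp continuous_snd
      have c3 : Continuous fun p : ℝ × ℝ =>
          cexp (-(2*(Real.pi:ℂ)*Complex.I*(p.2:ℂ)*(p.1:ℂ))) :=
        Complex.continuous_exp.comp
          (((continuous_const.mul (Complex.continuous_ofReal.comp continuous_snd)).mul
            (Complex.continuous_ofReal.comp continuous_fst)).neg)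
      exact c1.mul (c2.mul c3)
    have hint : Integrable (Function.uncurry fun (y ξ : ℝ) =>
        cexp ((-(Real.pi:ℂ) * β ε) * (y:ℂ)^2 + (2*(Real.pi:ℂ)*Complex.I*(x:ℂ)) * (y:ℂ))
          * (u₂ ξ * cexp (-(2*(Real.pi:ℂ)*Complex.I*(ξ:ℂ)*(y:ℂ)))))
        (volume.prod volume) := by
      refine Integrable.mono'
        ((integrable_exp_neg_mul_sq (by positivity : (0:ℝ) < Real.pi * ε)).mul_prod
          u₂.integrable.norm) hprodcont.aestronglyMeasurable
        (Eventually.of_forall fun p => ?_)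
      rw [Function.uncurry]
      rw [norm_mul, norm_mul, Complex.norm_exp, hre ε p.1,
        Complex.norm_exp]
      have him : (-(2*(Real.pi:ℂ)*Complex.I*(p.2:ℂ)*(p.1:ℂ))).re = 0 := by
        simp [Complex.mul_re, Complex.mul_im]
      rw [him, Real.exp_zero, mul_one]
      rw [show -(Real.pi * ε * p.1^2) = -(Real.pi * ε) * p.1^2 by ring]
    have step2 : F ε = ∫ ξ : ℝ, ∫ y : ℝ,
        cexp ((-(Real.pi:ℂ) * β ε) * (y:ℂ)^2 + (2*(Real.pi:ℂ)*Complex.I*(x:ℂ)) * (y:ℂ))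
          * (u₂ ξ * cexp (-(2*(Real.pi:ℂ)*Complex.I*(ξ:ℂ)*(y:ℂ)))) := by
      rw [step1]
      exact integral_integral_swap hint
    -- evaluate the inner Gaussian integral
    have key : ∀ ξ : ℝ, (∫ y : ℝ,
        cexp ((-(Real.pi:ℂ) * β ε) * (y:ℂ)^2 + (2*(Real.pi:ℂ)*Complex.I*(x:ℂ)) * (y:ℂ))
          * (u₂ ξ * cexp (-(2*(Real.pi:ℂ)*Complex.I*(ξ:ℂ)*(y:ℂ)))))
        = (1 / β ε) ^ (1/2 : ℂ) * (u₂ ξ * cexp (-(Real.pi:ℂ) * ((x:ℂ)-(ξ:ℂ))^2 / β ε)) := by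
      intro ξ
      have h1 : ∀ y : ℝ,
          cexp ((-(Real.pi:ℂ) * β ε) * (y:ℂ)^2 + (2*(Real.pi:ℂ)*Complex.I*(x:ℂ)) * (y:ℂ))
            * (u₂ ξ * cexp (-(2*(Real.pi:ℂ)*Complex.I*(ξ:ℂ)*(y:ℂ))))
          = u₂ ξ * cexp ((-(Real.pi:ℂ) * β ε) * (y:ℂ)^2
              + (2*(Real.pi:ℂ)*Complex.I*(x:ℂ) - 2*(Real.pi:ℂ)*Complex.I*(ξ:ℂ)) * (y:ℂ) + 0) := by
        intro y
        rw [show cexp ((-(Real.pi:ℂ) * β ε) * (y:ℂ)^2 + (2*(Real.pi:ℂ)*Complex.I*(x:ℂ)) * (y:ℂ))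
            * (u₂ ξ * cexp (-(2*(Real.pi:ℂ)*Complex.I*(ξ:ℂ)*(y:ℂ))))
            = u₂ ξ * (cexp ((-(Real.pi:ℂ) * β ε) * (y:ℂ)^2 + (2*(Real.pi:ℂ)*Complex.I*(x:ℂ)) * (y:ℂ))
              * cexp (-(2*(Real.pi:ℂ)*Complex.I*(ξ:ℂ)*(y:ℂ)))) by ring]
        rw [← Complex.exp_add]
        congr 1
        ring
      rw [integral_congr_ae (Eventually.of_forall h1), integral_const_mul,
        integral_cexp_quadratic hbre]
      have hden : -(-(Real.pi:ℂ) * β ε) ≠ 0 :=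
        neg_ne_zero.2 (mul_ne_zero (neg_ne_zero.2 hπC) (hβne ε))
      have e1 : ((Real.pi : ℝ):ℂ) / -(-(Real.pi:ℂ) * β ε) = 1 / β ε := by
        rw [div_eq_div_iff hden (hβne ε)]
        ring
      have e2 : (0:ℂ) - (2*(Real.pi:ℂ)*Complex.I*(x:ℂ) - 2*(Real.pi:ℂ)*Complex.I*(ξ:ℂ))^2
          / (4 * (-(Real.pi:ℂ) * β ε)) = -(Real.pi:ℂ) * ((x:ℂ)-(ξ:ℂ))^2 / β ε := by
        have hden4 : (4 : ℂ) * (-(Real.pi:ℂ) * β ε) ≠ 0 :=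
          mul_ne_zero (by norm_num) (mul_ne_zero (neg_ne_zero.2 hπC) (hβne ε))
        rw [show (2*(Real.pi:ℂ)*Complex.I*(x:ℂ) - 2*(Real.pi:ℂ)*Complex.I*(ξ:ℂ))^2
            = (2*(Real.pi:ℂ)*((x:ℂ)-(ξ:ℂ)))^2 * Complex.I^2 by ring, Complex.I_sq]
        rw [zero_sub, ← neg_div, div_eq_div_iff hden4 (hβne ε)]
        ring
      rw [e1, e2]
      ring
    rw [step2, hGdef]
    simp only
    rw [← integral_const_mul]
    exact integral_congr_ae (Eventually.of_forall fun ξ => key ξ)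
  -- Claim C
  have h10 : (1:ℂ) / β 0 = Complex.I * (a:ℂ) := by
    rw [div_eq_iff (hβne 0), hβdef]
    field_simp [Complex.ofReal_ne_zero.2 ha]
    rw [show Complex.I * ((a:ℂ) * ((0:ℝ):ℂ) - Complex.I) = -(Complex.I*Complex.I) by push_cast; ring, Complex.I_mul_I]
    ring
  have claimD : (∫ ξ : ℝ, u₂ ξ * cexp (-(Real.pi:ℂ) * ((x:ℂ)-(ξ:ℂ))^2 / β 0))
      = cexp (-((Real.pi:ℂ) * Complex.I * (a:ℂ) * (x:ℂ)^2)) * φ (a * x) := by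
    have hbinv : (β 0)⁻¹ = Complex.I * (a:ℂ) := by rw [inv_eq_one_div, h10]
    have hpt : ∀ ξ : ℝ, u₂ ξ * cexp (-(Real.pi:ℂ) * ((x:ℂ)-(ξ:ℂ))^2 / β 0)
        = cexp (-((Real.pi:ℂ) * Complex.I * (a:ℂ) * (x:ℂ)^2))
            * (cexp (((2*Real.pi*(ξ*(a*x)) : ℝ):ℂ) * Complex.I) * u₁ ξ) := by
      intro ξ
      rw [hu₂def]
      simp only [chirpS_apply]
      rw [div_eq_mul_inv, hbinv]
      rw [show (u₁ ξ * cexp ((Real.pi:ℂ)*Complex.I*(a:ℂ)*(ξ:ℂ)^2))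
            * cexp (-(Real.pi:ℂ) * ((x:ℂ)-(ξ:ℂ))^2 * (Complex.I * (a:ℂ)))
          = (cexp ((Real.pi:ℂ)*Complex.I*(a:ℂ)*(ξ:ℂ)^2)
              * cexp (-(Real.pi:ℂ) * ((x:ℂ)-(ξ:ℂ))^2 * (Complex.I * (a:ℂ)))) * u₁ ξ by ring,
        ← Complex.exp_add]
      rw [show cexp (-((Real.pi:ℂ) * Complex.I * (a:ℂ) * (x:ℂ)^2))
            * (cexp (((2*Real.pi*(ξ*(a*x)) : ℝ):ℂ) * Complex.I) * u₁ ξ)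
          = (cexp (-((Real.pi:ℂ) * Complex.I * (a:ℂ) * (x:ℂ)^2))
              * cexp (((2*Real.pi*(ξ*(a*x)) : ℝ):ℂ) * Complex.I)) * u₁ ξ by ring,
        ← Complex.exp_add]
      congr 2
      push_cast
      ring
    rw [integral_congr_ae (Eventually.of_forall hpt), integral_const_mul]
    congr 1
    have hinv : 𝓕⁻ (𝓕 ⇑φ) = ⇑φ :=
      Continuous.fourierInv_fourier_eq φ.continuous φ.integrable u₁.integrable
    calc (∫ ξ : ℝ, cexp (((2*Real.pi*(ξ*(a*x)) : ℝ):ℂ) * Complex.I) * u₁ ξ)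
        = 𝓕⁻ ⇑u₁ (a*x) := by
          rw [Real.fourierInv_eq']
          refine integral_congr_ae (Eventually.of_forall fun ξ => ?_)
          simp only [smul_eq_mul, RCLike.inner_apply, starRingEnd_apply, star_trivial]
          rw [mul_comm (a*x) ξ]
      _ = φ (a*x) := by rw [show ⇑u₁ = 𝓕 ⇑φ from rfl, hinv]
  have claimC : Tendsto G (𝓝[>] (0:ℝ))
      (𝓝 ((Complex.I * (a:ℂ)) ^ (1/2 : ℂ) *
        cexp (-((Real.pi:ℂ) * Complex.I * (a:ℂ) * (x:ℂ)^2)) * φ (a * x))) := by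
    have hβcont : Continuous β := by
      rw [hβdef]
      exact Complex.continuous_ofReal.sub continuous_const
    have hfac1 : Tendsto (fun ε : ℝ => (1/β ε) ^ (1/2 : ℂ)) (𝓝[>] (0:ℝ))
        (𝓝 ((Complex.I * (a:ℂ)) ^ (1/2 : ℂ))) := by
      apply Tendsto.mono_left ?_ nhdsWithin_le_nhds
      have hc : Tendsto (fun ε : ℝ => 1/β ε) (𝓝 0) (𝓝 (Complex.I * (a:ℂ))) := by
        rw [← h10]
        exact ((continuous_const.div hβcont hβne).tendsto 0)
      have hslit : Complex.I * (a:ℂ) ∈ Complex.slitPlane := by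
        rw [Complex.mem_slitPlane_iff]
        right
        simp [Complex.mul_im, ha]
      exact (continuousAt_cpow_const hslit).tendsto.comp hc
    have hfac2 : Tendsto (fun ε : ℝ => ∫ ξ : ℝ, u₂ ξ * cexp (-(Real.pi:ℂ) * ((x:ℂ)-(ξ:ℂ))^2 / β ε))
        (𝓝[>] (0:ℝ)) (𝓝 (∫ ξ : ℝ, u₂ ξ * cexp (-(Real.pi:ℂ) * ((x:ℂ)-(ξ:ℂ))^2 / β 0))) := by
      apply tendsto_integral_filter_of_dominated_convergence (fun ξ => ‖u₂ ξ‖)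
      · filter_upwards with ε
        apply Continuous.aestronglyMeasurable
        apply u₂.continuous.mul
        apply Complex.continuous_exp.comp
        exact (continuous_const.mul ((continuous_const.sub Complex.continuous_ofReal).pow 2)).div_const _
      · filter_upwards [self_mem_nhdsWithin] with ε (hε : 0 < ε)
        filter_upwards with ξ
        rw [norm_mul, Complex.norm_exp]
        have hw : (-(Real.pi:ℂ) * ((x:ℂ)-(ξ:ℂ))^2 / β ε).re ≤ 0 := by
          rw [show -(Real.pi:ℂ) * ((x:ℂ)-(ξ:ℂ))^2 / β ε
              = ((-(Real.pi*(x-ξ)^2) : ℝ):ℂ) * (β ε)⁻¹ by push_cast; ring]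
          rw [Complex.re_ofReal_mul]
          apply mul_nonpos_of_nonpos_of_nonneg
          · have : (0:ℝ) ≤ Real.pi * (x-ξ)^2 := by positivity
            linarith
          · rw [Complex.inv_re]
            apply div_nonneg ?_ (Complex.normSq_nonneg _)
            rw [hβdef]
            simp [Complex.div_re, Complex.normSq_ofReal, hε.le]
        have h1 : Real.exp ((-(Real.pi:ℂ) * ((x:ℂ)-(ξ:ℂ))^2 / β ε).re) ≤ 1 := by
          rw [Real.exp_le_one_iff]
          exact hw
        calc ‖u₂ ξ‖ * Real.exp ((-(Real.pi:ℂ) * ((x:ℂ)-(ξ:ℂ))^2 / β ε).re)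
            ≤ ‖u₂ ξ‖ * 1 := mul_le_mul_of_nonneg_left h1 (norm_nonneg _)
          _ = ‖u₂ ξ‖ := mul_one _
      · exact u₂.integrable.norm
      · filter_upwards with ξ
        apply Tendsto.mono_left ?_ nhdsWithin_le_nhds
        apply Tendsto.const_mul
        apply (Complex.continuous_exp.tendsto _).comp
        have hc : Continuous fun ε : ℝ => -(Real.pi:ℂ) * ((x:ℂ)-(ξ:ℂ))^2 / β ε := by
          exact (continuous_const.div hβcont hβne)
        exact hc.tendsto 0
    have hcomb := hfac1.mul hfac2
    rw [claimD] at hcomb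
    rw [hGdef]
    simpa [mul_assoc] using hcomb
  -- combine
  have hFG : Tendsto F (𝓝[>] (0:ℝ))
      (𝓝 ((Complex.I * (a:ℂ)) ^ (1/2 : ℂ) *
        cexp (-((Real.pi:ℂ) * Complex.I * (a:ℂ) * (x:ℂ)^2)) * φ (a * x))) := by
    refine claimC.congr' ?_
    filter_upwards [self_mem_nhdsWithin] with ε (hε : 0 < ε)
    exact (claimB ε hε).symm
  have hFop : Fop ⇑u₄ x = (Complex.I * (a:ℂ)) ^ (1/2 : ℂ) *
      cexp (-((Real.pi:ℂ) * Complex.I * (a:ℂ) * (x:ℂ)^2)) * φ (a * x) :=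
    tendsto_nhds_unique claimA hFG
  rw [Nop, hFop, ← sqrt_Ia a ha]
  have hz : cexp ((Real.pi:ℂ) * Complex.I * (a:ℂ) * (x:ℂ)^2)
      * cexp (-((Real.pi:ℂ) * Complex.I * (a:ℂ) * (x:ℂ)^2)) = 1 := by
    rw [← Complex.exp_add]
    simp
  calc cexp ((Real.pi:ℂ) * Complex.I * (a:ℂ) * (x:ℂ)^2)
        * ((Complex.I * (a:ℂ))^(1/2:ℂ) * cexp (-((Real.pi:ℂ) * Complex.I * (a:ℂ) * (x:ℂ)^2)) * φ (a*x))
      = (cexp ((Real.pi:ℂ) * Complex.I * (a:ℂ) * (x:ℂ)^2)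
          * cexp (-((Real.pi:ℂ) * Complex.I * (a:ℂ) * (x:ℂ)^2))) * ((Complex.I * (a:ℂ))^(1/2:ℂ) * φ (a*x)) := by
        ring
    _ = (Complex.I * (a:ℂ))^(1/2:ℂ) * φ (a*x) := by rw [hz, one_mul]
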